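/- A permutation group G on [n] is primitive if and only if G is sync-maximal, where G is sync-maximal means: for every transformation f : [n] → [n] of rank n−1, (1) for every subset S ⊆ [n] with |S| ≥ 2 there exists h in the monoid M generated by G ∪ {f} with h([n]) = S, and (2) for every two distinct subsets S, T ⊆ [n] each of size at least 2, there exists h ∈ M such that exactly one of h(S), h(T) is a singleton. -/

import Mathlib

open Finset

/-- The set of functions on `Fin n` arising from elements of the permutation group `G`. -/
def permSet {n : ℕ} (G : Subgroup (Equiv.Perm (Fin n))) : Set (Function.End (Fin n)) :=
  {h | ∃ g ∈ G, h = ⇑g}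

/-- The transformation monoid generated by `G ∪ {f}`. -/
def genMon {n : ℕ} (G : Subgroup (Equiv.Perm (Fin n))) (f : Fin n → Fin n) :
    Submonoid (Function.End (Fin n)) :=
  Submonoid.closure (permSet G ∪ {f})

/-- A permutation group is primitive if no subset `Δ` with `1 < |Δ| < n` is a block. -/
def IsPrimitive' {n : ℕ} (G : Subgroup (Equiv.Perm (Fin n))) : Prop :=
  ¬ ∃ Δ : Finset (Fin n), 1 < Δ.card ∧ Δ.card < n ∧
      ∀ g ∈ G, Δ.image ⇑g = Δ ∨ Disjoint (Δ.image ⇑g) Δ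

namespace SyncMax

variable {n : ℕ} {G : Subgroup (Equiv.Perm (Fin n))} {f : Fin n → Fin n}

lemma mem_genMon_perm (g : Equiv.Perm (Fin n)) (hg : g ∈ G) :
    (⇑g : Function.End (Fin n)) ∈ genMon G f :=
  Submonoid.subset_closure (Or.inl ⟨g, hg, rfl⟩)

lemma mem_genMon_f : (f : Function.End (Fin n)) ∈ genMon G f :=
  Submonoid.subset_closure (Or.inr rfl)

lemma not_block' (hprim : IsPrimitive' G) (Δ : Finset (Fin n))
    (hb : ∀ g ∈ G, Δ.image ⇑g = Δ ∨ Disjoint (Δ.image ⇑g) Δ) :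
    Δ.card ≤ 1 ∨ n ≤ Δ.card := by
  by_contra h
  push_neg at h
  exact hprim ⟨Δ, h.1, h.2, hb⟩

def ExactKer (h : Function.End (Fin n)) (P : Finset (Fin n)) : Prop :=
  (∀ y z, y ∈ P → z ∈ P → h y = h z) ∧
  (∀ y z, y ∉ P → z ∉ P → h y = h z) ∧
  (∀ y z, y ∈ P → z ∉ P → h y ≠ h z)

structure Collapse (f : Fin n → Fin n) where
  a : Fin n
  b : Fin n
  c : Fin n
  hab : a ≠ b
  hfab : f a = f b
  hc : ∀ x, f x ≠ c
  merge : ∀ y z, f y = f z → y = z ∨ (y = a ∧ z = b) ∨ (y = b ∧ z = a)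
  mem_image : ∀ y, y ≠ c → ∃ x, f x = y

lemma collapse_of_rank (hn : 1 ≤ n) (hf : (univ.image f).card = n - 1) :
    Nonempty (Collapse f) := by
  have hcardu : (univ : Finset (Fin n)).card = n := by simp
  -- a point not in the image
  have hlt : (univ.image f).card < (univ : Finset (Fin n)).card := by omega
  have : ∃ c, c ∉ univ.image f := by
    by_contra h
    push_neg at h
    have : univ.image f = univ := Finset.eq_univ_iff_forall.mpr h
    rw [this] at hf
    omega
  obtain ⟨c, hc⟩ := this
  have hc' : ∀ x, f x ≠ c := by
    intro x hx
    exact hc (hx ▸ Finset.mem_image_of_mem f (Finset.mem_univ x))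
  -- f not injective
  have hni : ¬ Function.Injective f := by
    intro hinj
    have := Finset.card_image_of_injective (univ : Finset (Fin n)) hinj
    omega
  obtain ⟨a, b, hfab, hab⟩ := Function.not_injective_iff.mp hni
  -- key claim: any collision point outside {a,b} gives a contradiction
  have claim2 : ∀ z y : Fin n, f y = f z → y ≠ z → z ≠ a → z ≠ b → False := by
    intro z y hfyz hyz hza hzb
    have hzb' : b ≠ z := fun h => hzb h.symm
    have cov : univ.image f ⊆ ((univ.erase z).erase b).image f := by
      intro w hw
      obtain ⟨x, -, hx⟩ := Finset.mem_image.mp hw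
      by_cases h1 : x = z
      · by_cases h2 : y = b
        · refine Finset.mem_image.mpr ⟨a, ?_, ?_⟩
          · exact Finset.mem_erase.mpr ⟨hab, Finset.mem_erase.mpr ⟨fun h => hza h.symm, Finset.mem_univ a⟩⟩
          · rw [hfab, ← h2, hfyz, ← h1, hx]
        · refine Finset.mem_image.mpr ⟨y, ?_, ?_⟩
          · exact Finset.mem_erase.mpr ⟨h2, Finset.mem_erase.mpr ⟨hyz, Finset.mem_univ y⟩⟩
          · rw [hfyz, ← h1, hx]
      · by_cases h3 : x = b
        · refine Finset.mem_image.mpr ⟨a, ?_, ?_⟩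
          · exact Finset.mem_erase.mpr ⟨hab, Finset.mem_erase.mpr ⟨fun h => hza h.symm, Finset.mem_univ a⟩⟩
          · rw [hfab, ← h3, hx]
        · refine Finset.mem_image.mpr ⟨x, ?_, hx⟩
          exact Finset.mem_erase.mpr ⟨h3, Finset.mem_erase.mpr ⟨h1, Finset.mem_univ x⟩⟩
    have hle := Finset.card_le_card cov
    have h1 : ((univ.erase z).erase b).card ≤ n - 2 := by
      have hbz : b ∈ (univ : Finset (Fin n)).erase z := Finset.mem_erase.mpr ⟨hzb', Finset.mem_univ b⟩
      have e1 : ((univ.erase z).erase b).card + 1 = ((univ : Finset (Fin n)).erase z).card :=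
        Finset.card_erase_add_one hbz
      have e2 : ((univ : Finset (Fin n)).erase z).card + 1 = n := by
        have := Finset.card_erase_add_one (Finset.mem_univ z)
        omega
      omega
    have him : (((univ.erase z).erase b).image f).card ≤ n - 2 :=
      le_trans Finset.card_image_le h1
    have hn2 : 2 ≤ n := by
      have : 1 ≤ (univ.image f).card := by
        refine Finset.card_pos.mpr ⟨f a, Finset.mem_image_of_mem f (Finset.mem_univ a)⟩
      omega
    omega
  have merge : ∀ y z, f y = f z → y = z ∨ (y = a ∧ z = b) ∨ (y = b ∧ z = a) := by
    intro y z hfyz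
    by_cases hyz : y = z
    · exact Or.inl hyz
    · right
      have hz : z = a ∨ z = b := by
        by_contra h
        push_neg at h
        exact claim2 z y hfyz hyz h.1 h.2
      have hy : y = a ∨ y = b := by
        by_contra h
        push_neg at h
        exact claim2 y z hfyz.symm (fun hh => hyz hh.symm) h.1 h.2
      rcases hy with hy | hy <;> rcases hz with hz | hz
      · exact absurd (hy.trans hz.symm) hyz
      · exact Or.inl ⟨hy, hz⟩
      · exact Or.inr ⟨hy, hz⟩
      · exact absurd (hy.trans hz.symm) hyz
  have mem_image : ∀ y, y ≠ c → ∃ x, f x = y := by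
    intro y hy
    have hsub : univ.image f ⊆ univ.erase c := by
      intro w hw
      obtain ⟨x, -, hx⟩ := Finset.mem_image.mp hw
      exact Finset.mem_erase.mpr ⟨hx ▸ hc' x, Finset.mem_univ w⟩
    have heq : univ.image f = univ.erase c := by
      apply Finset.eq_of_subset_of_card_le hsub
      have := Finset.card_erase_add_one (Finset.mem_univ c)
      omega
    have : y ∈ univ.image f := by
      rw [heq]; exact Finset.mem_erase.mpr ⟨hy, Finset.mem_univ y⟩
    obtain ⟨x, -, hx⟩ := Finset.mem_image.mp this
    exact ⟨x, hx⟩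
  exact ⟨⟨a, b, c, hab, hfab, hc', merge, mem_image⟩⟩

lemma transitive_of_primitive (hprim : IsPrimitive' G) (hn : 3 ≤ n) :
    ∀ x y : Fin n, ∃ g ∈ G, g x = y := by
  classical
  -- orbits
  set O : Fin n → Finset (Fin n) := fun x => univ.filter (fun z => ∃ g ∈ G, g x = z) with hO
  have hxO : ∀ x, x ∈ O x := fun x =>
    Finset.mem_filter.mpr ⟨Finset.mem_univ x, ⟨1, G.one_mem, rfl⟩⟩
  have himage : ∀ x, ∀ g ∈ G, (O x).image ⇑g = O x := by
    intro x g hg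
    apply Finset.eq_of_subset_of_card_le
    · intro w hw
      obtain ⟨z, hz, rfl⟩ := Finset.mem_image.mp hw
      obtain ⟨-, g', hg', rfl⟩ := Finset.mem_filter.mp hz
      exact Finset.mem_filter.mpr ⟨Finset.mem_univ _, ⟨g * g', G.mul_mem hg hg', rfl⟩⟩
    · rw [Finset.card_image_of_injective _ (Equiv.injective g)]
  have horb : ∀ x, (O x).card ≤ 1 ∨ n ≤ (O x).card := fun x =>
    not_block' hprim (O x) (fun g hg => Or.inl (himage x g hg))
  by_cases hbig : ∃ x₀, n ≤ (O x₀).card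
  · obtain ⟨x₀, hx₀⟩ := hbig
    have : O x₀ = univ := by
      apply Finset.eq_univ_of_card
      have : (O x₀).card ≤ n := by simpa using Finset.card_le_card (Finset.subset_univ (O x₀))
      simp; omega
    have hall : ∀ y, ∃ g ∈ G, g x₀ = y := by
      intro y
      have : y ∈ O x₀ := this ▸ Finset.mem_univ y
      obtain ⟨-, g, hg, hgy⟩ := Finset.mem_filter.mp this
      exact ⟨g, hg, hgy⟩
    intro x y
    obtain ⟨g1, hg1, hg1x⟩ := hall x
    obtain ⟨g2, hg2, hg2y⟩ := hall y
    refine ⟨g2 * g1⁻¹, G.mul_mem hg2 (G.inv_mem hg1), ?_⟩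
    simp [← hg1x, ← hg2y]
  · push_neg at hbig
    exfalso
    have hfix : ∀ x : Fin n, ∀ g ∈ G, g x = x := by
      intro x g hg
      have h1 : (O x).card ≤ 1 := (horb x).resolve_right (by have := hbig x; omega)
      exact Finset.card_le_one.mp h1 (g x)
        (Finset.mem_filter.mpr ⟨Finset.mem_univ _, ⟨g, hg, rfl⟩⟩) x (hxO x)
    have hn0 : 0 < n := by omega
    have hn1 : 1 < n := by omega
    set p : Fin n := ⟨0, hn0⟩ with hp
    set q : Fin n := ⟨1, hn1⟩ with hq
    have hpq : p ≠ q := by simp [hp, hq, Fin.ext_iff]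
    have hcard : ({p, q} : Finset (Fin n)).card = 2 := by
      rw [Finset.card_insert_of_notMem (by simp [hpq]), Finset.card_singleton]
    apply hprim
    refine ⟨{p, q}, by omega, by omega, ?_⟩
    intro g hg
    left
    rw [Finset.image_insert, Finset.image_singleton, hfix p g hg, hfix q g hg]

lemma crossing (hprim : IsPrimitive' G) (hn : 3 ≤ n) (p q : Fin n) (hpq : p ≠ q)
    (S : Finset (Fin n)) (hS : S.Nonempty) (hSu : S ≠ univ) :
    ∃ g ∈ G, g q ∈ S ∧ g p ∉ S := by
  classical
  set r : Fin n → Fin n → Prop :=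
    fun y z => ∃ g ∈ G, (y = g p ∧ z = g q) ∨ (y = g q ∧ z = g p) with hr
  have hrsymm : ∀ {y z}, r y z → r z y := by
    rintro y z ⟨g, hg, h | h⟩
    · exact ⟨g, hg, Or.inr ⟨h.2, h.1⟩⟩
    · exact ⟨g, hg, Or.inl ⟨h.2, h.1⟩⟩
  have hredge : ∀ (g₀ : Equiv.Perm (Fin n)), g₀ ∈ G → ∀ {y z}, r y z → r (g₀ y) (g₀ z) := by
    rintro g₀ hg₀ y z ⟨g, hg, h | h⟩
    · exact ⟨g₀ * g, G.mul_mem hg₀ hg, Or.inl ⟨by simp [h.1], by simp [h.2]⟩⟩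
    · exact ⟨g₀ * g, G.mul_mem hg₀ hg, Or.inr ⟨by simp [h.1], by simp [h.2]⟩⟩
  have hrtgequiv : ∀ (g₀ : Equiv.Perm (Fin n)), g₀ ∈ G → ∀ {y z},
      Relation.ReflTransGen r y z → Relation.ReflTransGen r (g₀ y) (g₀ z) := by
    intro g₀ hg₀ y z h
    induction h with
    | refl => exact Relation.ReflTransGen.refl
    | tail h1 h2 ih => exact ih.tail (hredge g₀ hg₀ h2)
  have hrtgsymm : ∀ {y z}, Relation.ReflTransGen r y z → Relation.ReflTransGen r z y := by
    intro y z h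
    induction h with
    | refl => exact Relation.ReflTransGen.refl
    | tail h1 h2 ih => exact (Relation.ReflTransGen.single (hrsymm h2)).trans ih
  -- the component of p is a block
  set B : Finset (Fin n) := univ.filter (fun z => Relation.ReflTransGen r p z) with hB
  have hmemB : ∀ z, z ∈ B ↔ Relation.ReflTransGen r p z := by
    intro z; simp [hB]
  have hblock : ∀ g ∈ G, B.image ⇑g = B ∨ Disjoint (B.image ⇑g) B := by
    intro g hg
    by_cases hcase : Relation.ReflTransGen r p (g p)
    · left
      apply Finset.Subset.antisymm
      · intro w hw
        obtain ⟨z, hz, rfl⟩ := Finset.mem_image.mp hw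
        exact (hmemB _).mpr (hcase.trans (hrtgequiv g hg ((hmemB _).mp hz)))
      · intro z hz
        refine Finset.mem_image.mpr ⟨g⁻¹ z, ?_, by simp⟩
        rw [hmemB]
        have h1 : Relation.ReflTransGen r (g⁻¹ p) (g⁻¹ z) :=
          hrtgequiv g⁻¹ (G.inv_mem hg) ((hmemB _).mp hz)
        have h2 : Relation.ReflTransGen r (g⁻¹ (g p)) (g⁻¹ p) :=
          hrtgequiv g⁻¹ (G.inv_mem hg) (hrtgsymm hcase)
        simpa using h2.trans h1
    · right
      rw [Finset.disjoint_left]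
      intro w hw hw'
      obtain ⟨z, hz, rfl⟩ := Finset.mem_image.mp hw
      apply hcase
      have h1 : Relation.ReflTransGen r p (g z) := (hmemB _).mp hw'
      have h2 : Relation.ReflTransGen r (g p) (g z) := hrtgequiv g hg ((hmemB _).mp hz)
      exact h1.trans (hrtgsymm h2)
  have hpB : p ∈ B := (hmemB p).mpr Relation.ReflTransGen.refl
  have hqB : q ∈ B := (hmemB q).mpr
    (Relation.ReflTransGen.single ⟨1, G.one_mem, Or.inl ⟨by simp, by simp⟩⟩)
  have hcard2 : 1 < B.card := Finset.one_lt_card.mpr ⟨p, hpB, q, hqB, hpq⟩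
  have hBuniv : B = univ := by
    apply Finset.eq_univ_of_card
    have h1 := not_block' hprim B hblock
    have h2 : B.card ≤ n := by simpa using Finset.card_le_card (Finset.subset_univ B)
    simp; omega
  have hconn : ∀ y z : Fin n, Relation.ReflTransGen r y z := by
    intro y z
    have hy : Relation.ReflTransGen r p y := (hmemB y).mp (hBuniv ▸ Finset.mem_univ y)
    have hz : Relation.ReflTransGen r p z := (hmemB z).mp (hBuniv ▸ Finset.mem_univ z)
    exact (hrtgsymm hy).trans hz
  -- a crossing edge exists (in some orientation)
  obtain ⟨u, hu⟩ := hS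
  obtain ⟨v, hv⟩ : ∃ v, v ∉ S := by
    by_contra h
    push_neg at h
    exact hSu (Finset.eq_univ_iff_forall.mpr h)
  have hwalk : ∀ y z : Fin n, Relation.ReflTransGen r y z → y ∉ S → z ∈ S →
      ∃ u' v', r v' u' ∧ v' ∉ S ∧ u' ∈ S := by
    intro y z h
    induction h with
    | refl => intro h1 h2; exact absurd h2 h1
    | @tail m z h1 h2 ih =>
      intro hy hz
      by_cases hm : m ∈ S
      · exact ih hy hm
      · exact ⟨z, m, h2, hm, hz⟩
  obtain ⟨u', v', hedge, hv', hu'⟩ := hwalk v u (hconn v u) hv hu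
  obtain ⟨g, hg, hor⟩ := hedge
  -- counting: #{g ∈ G | g q ∈ S ∧ g p ∉ S} = #{g ∈ G | g p ∈ S ∧ g q ∉ S}
  obtain ⟨t, ht, htp⟩ := transitive_of_primitive hprim hn p q
  set X : Finset (Equiv.Perm (Fin n)) := univ.filter (fun g => g ∈ G ∧ g p ∈ S) with hX
  set Y : Finset (Equiv.Perm (Fin n)) := univ.filter (fun g => g ∈ G ∧ g q ∈ S) with hY
  have hXY : Y.card = X.card := by
    apply Finset.card_bij (fun g _ => g * t)
    · intro g hgY
      rw [hY, Finset.mem_filter] at hgY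
      rw [hX, Finset.mem_filter]
      refine ⟨Finset.mem_univ _, G.mul_mem hgY.2.1 ht, ?_⟩
      simpa [htp] using hgY.2.2
    · intro g1 _ g2 _ h
      exact mul_right_cancel h
    · intro g hgX
      rw [hX, Finset.mem_filter] at hgX
      refine ⟨g * t⁻¹, ?_, by simp⟩
      rw [hY, Finset.mem_filter]
      refine ⟨Finset.mem_univ _, G.mul_mem hgX.2.1 (G.inv_mem ht), ?_⟩
      have : (g * t⁻¹) q = g (t⁻¹ q) := by simp
      rw [this, ← htp]
      simpa using hgX.2.2
  have hsplitX := Finset.card_filter_add_card_filter_not (s := X) (fun g => g q ∈ S)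
  have hsplitY := Finset.card_filter_add_card_filter_not (s := Y) (fun g => g p ∈ S)
  have hcommon : X.filter (fun g => g q ∈ S) = Y.filter (fun g => g p ∈ S) := by
    ext g
    simp only [hX, hY, Finset.mem_filter, Finset.mem_univ, true_and]
    tauto
  have hc2 : (X.filter (fun g => g q ∈ S)).card = (Y.filter (fun g => g p ∈ S)).card := by
    rw [hcommon]
  have hkey : (Y.filter (fun g => ¬ g p ∈ S)).card = (X.filter (fun g => ¬ g q ∈ S)).card := by
    omega
  -- conclude
  have hinhab : (Y.filter (fun g => ¬ g p ∈ S)).Nonempty := by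
    rcases hor with ⟨h1, h2⟩ | ⟨h1, h2⟩
    · -- v' = g p, u' = g q : out-orientation for "p", i.e. g q ∈ S, g p ∉ S
      refine ⟨g, ?_⟩
      rw [Finset.mem_filter, hY, Finset.mem_filter]
      exact ⟨⟨Finset.mem_univ _, hg, h2 ▸ hu'⟩, h1 ▸ hv'⟩
    · -- v' = g q, u' = g p : then X-side nonempty, use cardinality
      rw [← Finset.card_pos, hkey, Finset.card_pos]
      refine ⟨g, ?_⟩
      rw [Finset.mem_filter, hX, Finset.mem_filter]
      exact ⟨⟨Finset.mem_univ _, hg, h2 ▸ hu'⟩, h1 ▸ hv'⟩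
  obtain ⟨g₀, hg₀⟩ := hinhab
  rw [Finset.mem_filter, hY, Finset.mem_filter] at hg₀
  exact ⟨g₀, hg₀.1.2.1, hg₀.1.2.2, hg₀.2⟩

lemma reach (hprim : IsPrimitive' G) (hn : 3 ≤ n) (C : Collapse f) :
    ∀ S : Finset (Fin n), S.Nonempty → ∃ h ∈ genMon G f, univ.image h = S := by
  classical
  suffices H : ∀ k : ℕ, ∀ S : Finset (Fin n), S.Nonempty → n ≤ S.card + k →
      ∃ h ∈ genMon G f, univ.image h = S by
    intro S hS
    exact H n S hS (by omega)
  intro k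
  induction k with
  | zero =>
    intro S hS hcard
    have : S = univ := by
      apply Finset.eq_univ_of_card
      have : S.card ≤ n := by simpa using Finset.card_le_card (Finset.subset_univ S)
      simp; omega
    refine ⟨1, Submonoid.one_mem _, ?_⟩
    rw [this]; exact Finset.image_id
  | succ k ih =>
    intro S hS hcard
    by_cases hSu : S = univ
    · refine ⟨1, Submonoid.one_mem _, ?_⟩
      rw [hSu]; exact Finset.image_id
    · have hcfa : C.c ≠ f C.a := fun h => C.hc C.a h.symm
      obtain ⟨g, hg, hgd, hgc⟩ := crossing hprim hn C.c (f C.a) hcfa S hS hSu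
      set T : Finset (Fin n) := univ.filter (fun y => g (f y) ∈ S) with hT
      have haT : C.a ∈ T := Finset.mem_filter.mpr ⟨Finset.mem_univ _, hgd⟩
      have hbT : C.b ∈ T := by
        refine Finset.mem_filter.mpr ⟨Finset.mem_univ _, ?_⟩
        rw [← C.hfab]; exact hgd
      have hsurj : ∀ s ∈ S, ∃ x ∈ T.erase C.a, g (f x) = s := by
        intro s hs
        have hsc : Equiv.symm g s ≠ C.c := by
          intro h
          apply hgc
          have : g (Equiv.symm g s) = s := Equiv.apply_symm_apply g s
          rw [h] at this
          rw [this]; exact hs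
        obtain ⟨x, hx⟩ := C.mem_image _ hsc
        have hgfx : g (f x) = s := by rw [hx]; exact Equiv.apply_symm_apply g s
        by_cases hxa : x = C.a
        · refine ⟨C.b, Finset.mem_erase.mpr ⟨fun h => C.hab h.symm, hbT⟩, ?_⟩
          rw [← C.hfab, ← hxa]; exact hgfx
        · exact ⟨x, Finset.mem_erase.mpr ⟨hxa,
            Finset.mem_filter.mpr ⟨Finset.mem_univ _, hgfx ▸ hs⟩⟩, hgfx⟩
      have hinj : ∀ y ∈ T.erase C.a, ∀ z ∈ T.erase C.a, g (f y) = g (f z) → y = z := by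
        intro y hy z hz h
        have hfyz : f y = f z := Equiv.injective g h
        rcases C.merge y z hfyz with h1 | h1 | h1
        · exact h1
        · exact absurd h1.1 (Finset.mem_erase.mp hy).1
        · exact absurd h1.2 (Finset.mem_erase.mp hz).1
      have hcardT : T.card = S.card + 1 := by
        have h1 : (T.erase C.a).card + 1 = T.card := Finset.card_erase_add_one haT
        have h2 : (T.erase C.a).card = S.card := by
          apply Finset.card_bij (fun y _ => g (f y))
          · intro y hy
            have := (Finset.mem_filter.mp (Finset.mem_of_mem_erase hy)).2
            exact this
          · intro y1 h1 y2 h2 h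
            exact hinj y1 h1 y2 h2 h
          · intro s hs
            obtain ⟨x, hx, hgfx⟩ := hsurj s hs
            exact ⟨x, hx, hgfx⟩
        omega
      have hTne : T.Nonempty := ⟨C.a, haT⟩
      obtain ⟨h', hh', himg⟩ := ih T hTne (by omega)
      let m1 : Function.End (Fin n) := ⇑g
      let m2 : Function.End (Fin n) := f
      refine ⟨m1 * m2 * h',
        Submonoid.mul_mem _ (Submonoid.mul_mem _ (mem_genMon_perm g hg) mem_genMon_f) hh', ?_⟩
      have hfun : (m1 * m2 * h') = (fun z => g (f z)) ∘ h' := rfl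
      rw [hfun, show image ((fun z => g (f z)) ∘ h') univ = image (fun z => g (f z)) (image h' univ) from Finset.image_image.symm, himg]
      -- T.image (fun z => g (f z)) = S
      apply Finset.Subset.antisymm
      · intro s hs
        obtain ⟨y, hy, rfl⟩ := Finset.mem_image.mp hs
        exact (Finset.mem_filter.mp hy).2
      · intro s hs
        obtain ⟨x, hx, hgfx⟩ := hsurj s hs
        exact Finset.mem_image.mpr ⟨x, Finset.mem_of_mem_erase hx, hgfx⟩

lemma master (hprim : IsPrimitive' G) (hn : 3 ≤ n) (C : Collapse f) :
    ∀ x : Fin n, ∃ h ∈ genMon G f, ExactKer h {x} := by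
  classical
  -- base : a rank-2 element
  have hbase : ∃ h ∈ genMon G f, ∃ P : Finset (Fin n),
      ExactKer h P ∧ P.Nonempty ∧ P ≠ univ := by
    set u : Fin n := ⟨0, by omega⟩ with hu
    set v : Fin n := ⟨1, by omega⟩ with hv
    have huv : u ≠ v := by simp [hu, hv, Fin.ext_iff]
    obtain ⟨h₁, hh₁, himg⟩ := reach hprim hn C {u, v} ⟨u, by simp⟩
    refine ⟨h₁, hh₁, univ.filter (fun y => h₁ y = u), ?_, ?_, ?_⟩
    · refine ⟨?_, ?_, ?_⟩
      · intro y z hy hz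
        rw [(Finset.mem_filter.mp hy).2, (Finset.mem_filter.mp hz).2]
      · intro y z hy hz
        have hy' : h₁ y ≠ u := fun h => hy (Finset.mem_filter.mpr ⟨Finset.mem_univ _, h⟩)
        have hz' : h₁ z ≠ u := fun h => hz (Finset.mem_filter.mpr ⟨Finset.mem_univ _, h⟩)
        have hyv : h₁ y = v := by
          have : h₁ y ∈ univ.image h₁ := Finset.mem_image_of_mem h₁ (Finset.mem_univ y)
          rw [himg] at this
          rcases Finset.mem_insert.mp this with h | h
          · exact absurd h hy'
          · exact Finset.mem_singleton.mp h
        have hzv : h₁ z = v := by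
          have : h₁ z ∈ univ.image h₁ := Finset.mem_image_of_mem h₁ (Finset.mem_univ z)
          rw [himg] at this
          rcases Finset.mem_insert.mp this with h | h
          · exact absurd h hz'
          · exact Finset.mem_singleton.mp h
        rw [hyv, hzv]
      · intro y z hy hz
        rw [(Finset.mem_filter.mp hy).2]
        exact fun h => hz (Finset.mem_filter.mpr ⟨Finset.mem_univ _, h.symm⟩)
    · -- nonempty : u has a preimage
      have : u ∈ univ.image h₁ := by rw [himg]; simp
      obtain ⟨y, -, hy⟩ := Finset.mem_image.mp this
      exact ⟨y, Finset.mem_filter.mpr ⟨Finset.mem_univ _, hy⟩⟩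
    · -- proper : v has a preimage
      have : v ∈ univ.image h₁ := by rw [himg]; simp
      obtain ⟨y, -, hy⟩ := Finset.mem_image.mp this
      intro hPu
      have : y ∈ univ.filter (fun y => h₁ y = u) := by rw [hPu]; exact Finset.mem_univ y
      have := (Finset.mem_filter.mp this).2
      exact huv (this ▸ hy ▸ rfl)
  -- descent
  have hdesc : ∀ (P : Finset (Fin n)) (h : Function.End (Fin n)),
      h ∈ genMon G f → ExactKer h P → P.Nonempty → P ≠ univ → 2 ≤ P.card →
      ∃ P' h', h' ∈ genMon G f ∧ ExactKer h' P' ∧ P'.card = P.card - 1 ∧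
        P'.Nonempty ∧ P' ≠ univ := by
    intro P h hhM hK hPne hPu hP2
    have hdc : f C.a ≠ C.c := C.hc C.a
    obtain ⟨g, hg, hgc, hgd⟩ := crossing hprim hn (f C.a) C.c hdc P hPne hPu
    set P' : Finset (Fin n) := univ.filter (fun y => g (f y) ∈ P) with hP'
    have hmemP' : ∀ y, y ∈ P' ↔ g (f y) ∈ P := by intro y; simp [hP']
    have hbij : P'.card = (P.erase (g C.c)).card := by
      apply Finset.card_bij (fun y _ => g (f y))
      · intro y hy
        refine Finset.mem_erase.mpr ⟨?_, (hmemP' y).mp hy⟩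
        intro hyc
        exact C.hc y (Equiv.injective g hyc)
      · intro y1 hy1 y2 hy2 hgf
        have hfyz : f y1 = f y2 := Equiv.injective g hgf
        rcases C.merge y1 y2 hfyz with h1 | h1 | h1
        · exact h1
        · exfalso
          apply hgd
          have : g (f y1) ∈ P := (hmemP' y1).mp hy1
          rw [h1.1] at this
          exact this
        · exfalso
          apply hgd
          have : g (f y1) ∈ P := (hmemP' y1).mp hy1
          rw [h1.1, ← C.hfab] at this
          exact this
      · intro p₀ hp₀
        obtain ⟨hpne, hpP⟩ := Finset.mem_erase.mp hp₀
        have : Equiv.symm g p₀ ≠ C.c := by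
          intro hcc
          apply hpne
          rw [← hcc]
          exact (Equiv.apply_symm_apply g p₀).symm
        obtain ⟨x, hx⟩ := C.mem_image _ this
        have hgfx : g (f x) = p₀ := by rw [hx]; exact Equiv.apply_symm_apply g p₀
        exact ⟨x, (hmemP' x).mpr (hgfx ▸ hpP), hgfx⟩
    have hcard : P'.card = P.card - 1 := by
      rw [hbij, Finset.card_erase_of_mem hgc]
    have hPcardn : P.card < n := by
      have h1 : P.card ≤ n := by simpa using Finset.card_le_card (Finset.subset_univ P)
      rcases lt_or_eq_of_le h1 with h | h
      · exact h
      · exact absurd (Finset.eq_univ_of_card P (by simp [h])) hPu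
    have hP'u : P' ≠ univ := by
      intro h
      have : P'.card = n := by rw [h]; simp
      omega
    have hP'ne : P'.Nonempty := by
      rw [← Finset.card_pos]
      omega
    let m1 : Function.End (Fin n) := ⇑g
    let m2 : Function.End (Fin n) := f
    refine ⟨P', h * m1 * m2,
      Submonoid.mul_mem _ (Submonoid.mul_mem _ hhM (mem_genMon_perm g hg)) mem_genMon_f,
      ⟨?_, ?_, ?_⟩, hcard, hP'ne, hP'u⟩
    · intro y z hy hz
      exact hK.1 _ _ ((hmemP' y).mp hy) ((hmemP' z).mp hz)
    · intro y z hy hz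
      exact hK.2.1 _ _ (fun hc => hy ((hmemP' y).mpr hc)) (fun hc => hz ((hmemP' z).mpr hc))
    · intro y z hy hz
      exact hK.2.2 _ _ ((hmemP' y).mp hy) (fun hc => hz ((hmemP' z).mpr hc))
  -- iterate the descent down to a singleton kernel class
  have hiter : ∃ x₀ : Fin n, ∃ h ∈ genMon G f, ExactKer h {x₀} := by
    obtain ⟨h, hhM, P, hK, hPne, hPu⟩ := hbase
    have : ∀ (k : ℕ) (P : Finset (Fin n)) (h : Function.End (Fin n)),
        h ∈ genMon G f → ExactKer h P → P.Nonempty → P ≠ univ → P.card ≤ k →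
        ∃ x₀ : Fin n, ∃ h' ∈ genMon G f, ExactKer h' {x₀} := by
      intro k
      induction k with
      | zero =>
        intro P h _ _ hPne _ hPk
        exact absurd (Finset.card_pos.mpr hPne) (by omega)
      | succ k ih =>
        intro P h hhM hK hPne hPu hPk
        by_cases h1 : P.card = 1
        · obtain ⟨x₀, hx₀⟩ := Finset.card_eq_one.mp h1
          exact ⟨x₀, h, hhM, hx₀ ▸ hK⟩
        · have h2 : 2 ≤ P.card := by
            have := Finset.card_pos.mpr hPne
            omega
          obtain ⟨P', h', hh'M, hK', hc', hne', hu'⟩ := hdesc P h hhM hK hPne hPu h2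
          exact ih P' h' hh'M hK' hne' hu' (by omega)
    exact this n P h hhM hK hPne hPu
      (by simpa using Finset.card_le_card (Finset.subset_univ P))
  -- conjugate to an arbitrary point
  intro x
  obtain ⟨x₀, h, hhM, hK⟩ := hiter
  obtain ⟨g, hg, hgx⟩ := transitive_of_primitive hprim hn x₀ x
  let m1 : Function.End (Fin n) := ⇑(g⁻¹)
  refine ⟨h * m1, Submonoid.mul_mem _ hhM (mem_genMon_perm g⁻¹ (G.inv_mem hg)), ?_, ?_, ?_⟩
  · intro y z hy hz
    rw [Finset.mem_singleton.mp hy, Finset.mem_singleton.mp hz]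
  · intro y z hy hz
    have hy' : g⁻¹ y ∉ ({x₀} : Finset (Fin n)) := by
      rw [Finset.mem_singleton]
      intro hc
      apply hy
      rw [Finset.mem_singleton, ← hgx, ← hc]
      simp
    have hz' : g⁻¹ z ∉ ({x₀} : Finset (Fin n)) := by
      rw [Finset.mem_singleton]
      intro hc
      apply hz
      rw [Finset.mem_singleton, ← hgx, ← hc]
      simp
    exact hK.2.1 _ _ hy' hz'
  · intro y z hy hz
    have hy' : g⁻¹ y ∈ ({x₀} : Finset (Fin n)) := by
      rw [Finset.mem_singleton.mp hy, ← hgx]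
      simp
    have hz' : g⁻¹ z ∉ ({x₀} : Finset (Fin n)) := by
      rw [Finset.mem_singleton]
      intro hc
      apply hz
      rw [Finset.mem_singleton, ← hgx, ← hc]
      simp
    exact hK.2.2 _ _ hy' hz'

lemma cond2
    (hmaster : ∀ x : Fin n, ∃ h ∈ genMon G f, ExactKer h {x}) :
    ∀ S T : Finset (Fin n), 2 ≤ S.card → 2 ≤ T.card → S ≠ T →
      ∃ h ∈ genMon G f, Xor' ((S.image h).card = 1) ((T.image h).card = 1) := by
  have aux : ∀ S T : Finset (Fin n), 2 ≤ S.card → 2 ≤ T.card →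
      ∀ x, x ∈ T → x ∉ S →
      ∃ h ∈ genMon G f, ((S.image h).card = 1) ∧ ¬ ((T.image h).card = 1) := by
    intro S T hS hT x hxT hxS
    obtain ⟨h, hhM, hK⟩ := hmaster x
    obtain ⟨s₀, hs₀⟩ := Finset.card_pos.mp (show 0 < S.card by omega)
    refine ⟨h, hhM, ?_, ?_⟩
    · apply Finset.card_eq_one.mpr ⟨h s₀, ?_⟩
      apply Finset.Subset.antisymm
      · intro w hw
        obtain ⟨s, hs, rfl⟩ := Finset.mem_image.mp hw
        rw [Finset.mem_singleton]
        apply hK.2.1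
        · rw [Finset.mem_singleton]; intro hc; exact hxS (hc ▸ hs)
        · rw [Finset.mem_singleton]; intro hc; exact hxS (hc ▸ hs₀)
      · intro w hw
        rw [Finset.mem_singleton.mp hw]
        exact Finset.mem_image_of_mem h hs₀
    · obtain ⟨t, htT, htx⟩ := Finset.exists_mem_ne (show 1 < T.card by omega) x
      have hne : h x ≠ h t := by
        apply hK.2.2
        · exact Finset.mem_singleton.mpr rfl
        · rw [Finset.mem_singleton]; exact htx
      have : 1 < (T.image h).card := by
        apply Finset.one_lt_card.mpr
        exact ⟨h x, Finset.mem_image_of_mem h hxT, h t, Finset.mem_image_of_mem h htT,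
          fun hc => hne hc⟩
      omega
  intro S T hS hT hST
  have hdiff : (∃ x, x ∈ T ∧ x ∉ S) ∨ (∃ x, x ∈ S ∧ x ∉ T) := by
    by_contra hcon
    push_neg at hcon
    apply hST
    exact Finset.Subset.antisymm (fun x hx => hcon.2 x hx) (fun x hx => hcon.1 x hx)
  rcases hdiff with ⟨x, hxT, hxS⟩ | ⟨x, hxS, hxT⟩
  · obtain ⟨h, hhM, h1, h2⟩ := aux S T hS hT x hxT hxS
    exact ⟨h, hhM, Or.inl ⟨h1, h2⟩⟩
  · obtain ⟨h, hhM, h1, h2⟩ := aux T S hT hS x hxS hxT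
    exact ⟨h, hhM, Or.inr ⟨h1, h2⟩⟩


lemma converse
    (hrhs : ∀ f : Fin n → Fin n, (univ.image f).card = n - 1 →
        (∀ S : Finset (Fin n), 2 ≤ S.card →
          ∃ h ∈ genMon G f, univ.image h = S) ∧
        (∀ S T : Finset (Fin n), 2 ≤ S.card → 2 ≤ T.card → S ≠ T →
          ∃ h ∈ genMon G f,
            Xor' ((S.image h).card = 1) ((T.image h).card = 1))) :
    IsPrimitive' G := by
  classical
  rintro ⟨Δ, hΔ1, hΔn, hblock⟩
  obtain ⟨a, haΔ, b, hbΔ, hab⟩ := Finset.one_lt_card.mp hΔ1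
  set f : Fin n → Fin n := fun x => if x = a then b else x with hfdef
  have hfa : f a = b := by simp [hfdef]
  have hfy : ∀ y, y ≠ a → f y = y := by intro y hy; simp [hfdef, hy]
  have hrank : (univ.image f).card = n - 1 := by
    have him : univ.image f = univ.erase a := by
      apply Finset.Subset.antisymm
      · intro w hw
        obtain ⟨x, -, rfl⟩ := Finset.mem_image.mp hw
        by_cases hx : x = a
        · rw [hx, hfa]
          exact Finset.mem_erase.mpr ⟨fun h => hab h.symm, Finset.mem_univ b⟩
        · rw [hfy x hx]
          exact Finset.mem_erase.mpr ⟨hx, Finset.mem_univ x⟩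
      · intro y hy
        obtain ⟨hya, -⟩ := Finset.mem_erase.mp hy
        exact Finset.mem_image.mpr ⟨y, Finset.mem_univ y, hfy y hya⟩
    rw [him, Finset.card_erase_of_mem (Finset.mem_univ a)]
    simp
  obtain ⟨cond1, -⟩ := hrhs f hrank
  have hcard2 : ({a, b} : Finset (Fin n)).card = 2 := by
    rw [Finset.card_insert_of_notMem (by simp [hab]), Finset.card_singleton]
  obtain ⟨h₁, hh₁, himg⟩ := cond1 {a, b} (by omega)
  -- h := f ∘ h₁ is constant with value b
  let m2 : Function.End (Fin n) := f
  set h : Function.End (Fin n) := m2 * h₁ with hh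
  have hhM : h ∈ genMon G f :=
    Submonoid.mul_mem _ (Submonoid.subset_closure (Or.inr rfl)) hh₁
  have hconst : ∀ z, h z = b := by
    intro z
    have h1 : h₁ z ∈ univ.image h₁ := Finset.mem_image_of_mem h₁ (Finset.mem_univ z)
    rw [himg] at h1
    have : h z = f (h₁ z) := rfl
    rw [this]
    rcases Finset.mem_insert.mp h1 with hcase | hcase
    · rw [hcase, hfa]
    · rw [Finset.mem_singleton.mp hcase]
      exact hfy b (fun hc => hab hc.symm)
  -- the invariant
  set rel : Fin n → Fin n → Prop :=
    fun y z => y = z ∨ ∃ g ∈ G, y ∈ Δ.image ⇑g ∧ z ∈ Δ.image ⇑g with hrel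
  have him1 : Δ.image ⇑(1 : Equiv.Perm (Fin n)) = Δ := by simp
  have hrelΔ : ∀ u v, u ∈ Δ → v ∈ Δ → rel u v := by
    intro u v hu hv
    exact Or.inr ⟨1, G.one_mem, him1.symm ▸ hu, him1.symm ▸ hv⟩
  have hblockmem : ∀ (g : Equiv.Perm (Fin n)), g ∈ G → ∀ w,
      b ∈ Δ.image ⇑g → w ∈ Δ.image ⇑g → w ∈ Δ := by
    intro g hg w hbg hwg
    rcases hblock g hg with heq | hdisj
    · exact heq ▸ hwg
    · exact absurd hbΔ (Finset.disjoint_left.mp hdisj hbg)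
  have hPsi : ∀ (m : Function.End (Fin n)), m ∈ genMon G f →
      ∀ y z, rel (m y) (m z) → rel y z := by
    intro m hm
    induction hm using Submonoid.closure_induction with
    | mem x hx =>
      rcases hx with ⟨g₀, hg₀, rfl⟩ | hx
      · -- a permutation
        intro y z hrel'
        rcases hrel' with heq | ⟨g, hg, hy, hz⟩
        · exact Or.inl (Equiv.injective g₀ heq)
        · right
          refine ⟨g₀⁻¹ * g, G.mul_mem (G.inv_mem hg₀) hg, ?_, ?_⟩
          · obtain ⟨δ, hδ, hδ2⟩ := Finset.mem_image.mp hy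
            refine Finset.mem_image.mpr ⟨δ, hδ, ?_⟩
            have e : (g₀⁻¹ * g) δ = g₀⁻¹ (g δ) := rfl
            rw [e, hδ2]; simp
          · obtain ⟨δ, hδ, hδ2⟩ := Finset.mem_image.mp hz
            refine Finset.mem_image.mpr ⟨δ, hδ, ?_⟩
            have e : (g₀⁻¹ * g) δ = g₀⁻¹ (g δ) := rfl
            rw [e, hδ2]; simp
      · -- the generator f
        have hxf : x = (f : Function.End (Fin n)) := hx
        subst hxf
        intro y z hrel'
        by_cases hya : y = a <;> by_cases hza : z = a
        · exact Or.inl (hya.trans hza.symm)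
        · rw [hya, hfa, hfy z hza] at hrel'
          rcases hrel' with heq | ⟨g, hg, hyg, hzg⟩
          · exact hrelΔ y z (by rw [hya]; exact haΔ) (by rw [← heq]; exact hbΔ)
          · exact hrelΔ y z (by rw [hya]; exact haΔ) (hblockmem g hg z hyg hzg)
        · rw [hfy y hya, hza, hfa] at hrel'
          rcases hrel' with heq | ⟨g, hg, hyg, hzg⟩
          · exact hrelΔ y z (by rw [heq]; exact hbΔ) (by rw [hza]; exact haΔ)
          · exact hrelΔ y z (hblockmem g hg y hzg hyg) (by rw [hza]; exact haΔ)
        · rw [hfy y hya, hfy z hza] at hrel'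
          exact hrel'
    | one =>
      intro y z hrel'
      exact hrel'
    | mul x y hx hy ihx ihy =>
      intro v w hrel'
      exact ihy _ _ (ihx _ _ hrel')
  obtain ⟨z₀, hz₀⟩ : ∃ z₀, z₀ ∉ Δ := by
    by_contra hcc
    push_neg at hcc
    have hequniv : Δ = univ := Finset.eq_univ_iff_forall.mpr hcc
    rw [hequniv] at hΔn
    simp at hΔn
  have hrelfinal := hPsi h hhM a z₀ (by rw [hconst a, hconst z₀]; exact Or.inl rfl)
  rcases hrelfinal with heq | ⟨g, hg, hag, hzg⟩
  · exact hz₀ (heq ▸ haΔ)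
  · rcases hblock g hg with hE | hdisj
    · exact hz₀ (hE ▸ hzg)
    · exact absurd haΔ (Finset.disjoint_left.mp hdisj hag)

end SyncMax

theorem primitive_iff_sync_maximal {n : ℕ} (G : Subgroup (Equiv.Perm (Fin n))) :
    IsPrimitive' G ↔
      ∀ f : Fin n → Fin n, (univ.image f).card = n - 1 →
        (∀ S : Finset (Fin n), 2 ≤ S.card →
          ∃ h ∈ genMon G f, univ.image h = S) ∧
        (∀ S T : Finset (Fin n), 2 ≤ S.card → 2 ≤ T.card → S ≠ T →
          ∃ h ∈ genMon G f,
            Xor' ((S.image h).card = 1) ((T.image h).card = 1)) := by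
  constructor
  · intro hprim f hf
    by_cases hn : 3 ≤ n
    · obtain ⟨C⟩ := SyncMax.collapse_of_rank (by omega) hf
      refine ⟨fun S hS => SyncMax.reach hprim hn C S (Finset.card_pos.mp (by omega)), ?_⟩
      exact SyncMax.cond2 (SyncMax.master hprim hn C)
    · constructor
      · intro S hS
        have hSn : S.card ≤ n := by
          simpa using Finset.card_le_card (Finset.subset_univ S)
        have hn2 : n = 2 := by omega
        refine ⟨1, Submonoid.one_mem _, ?_⟩
        have : S = univ := Finset.eq_univ_of_card S (by simp [hn2]; omega)
        rw [this]
        exact Finset.image_id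
      · intro S T hS hT hST
        exfalso
        have hSn : S.card ≤ n := by
          simpa using Finset.card_le_card (Finset.subset_univ S)
        have hTn : T.card ≤ n := by
          simpa using Finset.card_le_card (Finset.subset_univ T)
        have hn2 : n = 2 := by omega
        have h1 : S = univ := Finset.eq_univ_of_card S (by simp [hn2]; omega)
        have h2 : T = univ := Finset.eq_univ_of_card T (by simp [hn2]; omega)
        exact hST (h1.trans h2.symm)
  · exact SyncMax.converse
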